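/- Let f : ℝ → ℝ≥0∞ be measurable. Then (volume.withDensity f).map (fun x => x⁻¹) = volume.withDensity (fun z => f z⁻¹ * ENNReal.ofReal (1 / z ^ 2)); that is, if x has density f with respect to Lebesgue measure then 1/x has density z ↦ f(1/z)·(1/z²). -/

import Mathlib

open MeasureTheory
open scoped ENNReal

theorem density_of_inverse (f : ℝ → ℝ≥0∞) (hf : Measurable f) :
    (volume.withDensity f).map (fun x : ℝ => x⁻¹) =
      volume.withDensity (fun z => f z⁻¹ * ENNReal.ofReal (1 / z ^ 2)) := by
  ext s hs
  rw [Measure.map_apply measurable_inv hs, withDensity_apply _ (measurable_inv hs),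
    withDensity_apply _ hs]
  have h0 : (volume : Measure ℝ) {(0:ℝ)} = 0 := measure_singleton 0
  have hpre : (fun x : ℝ => x⁻¹) ⁻¹' s = (fun x : ℝ => x⁻¹) '' s := by
    ext x
    constructor
    · intro h; exact ⟨x⁻¹, h, inv_inv x⟩
    · rintro ⟨y, hy, rfl⟩; simpa [Set.mem_preimage, inv_inv] using hy
  have hae1 : ((fun x : ℝ => x⁻¹) '' s : Set ℝ) =ᵐ[volume]
      ((fun x : ℝ => x⁻¹) '' (s \ {0}) : Set ℝ) := by
    rw [MeasureTheory.ae_eq_set]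
    constructor
    · refine measure_mono_null ?_ h0
      rintro x ⟨⟨y, hy, rfl⟩, hx⟩
      by_contra hne
      exact hx ⟨y, ⟨hy, fun h => hne (by simp [Set.mem_singleton_iff.mp h])⟩, rfl⟩
    · refine measure_mono_null ?_ (measure_empty)
      rintro x ⟨⟨y, hy, rfl⟩, hx⟩
      exact hx ⟨y, hy.1, rfl⟩
  have haes : s =ᵐ[volume] (s \ {0} : Set ℝ) := by
    rw [MeasureTheory.ae_eq_set]
    refine ⟨measure_mono_null (fun x hx => ?_) h0, measure_mono_null (fun x hx => hx.2 hx.1.1) measure_empty⟩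
    by_contra hne
    exact hx.2 ⟨hx.1, fun h => hne (by simp [Set.mem_singleton_iff.mp h])⟩
  rw [hpre, setLIntegral_congr hae1, setLIntegral_congr haes.symm.symm]
  have hsm : MeasurableSet (s \ {0} : Set ℝ) := hs.diff (measurableSet_singleton 0)
  have hder : ∀ x ∈ (s \ {0} : Set ℝ),
      HasDerivWithinAt (fun y : ℝ => y⁻¹) (-(x ^ 2)⁻¹) (s \ {0}) x := fun x hx =>
    (hasDerivAt_inv (by simpa using hx.2 : x ≠ 0)).hasDerivWithinAt
  have hinj : Set.InjOn (fun y : ℝ => y⁻¹) (s \ {0}) := inv_injective.injOn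
  have key : ∫⁻ x in (fun y : ℝ => y⁻¹) '' (s \ {0}), f x
      = ∫⁻ x in s \ {0}, ENNReal.ofReal |(-(x ^ 2)⁻¹)| * f x⁻¹ := by
    simpa only [ContinuousLinearMap.det_toSpanSingleton] using
      lintegral_image_eq_lintegral_abs_det_fderiv_mul volume hsm
        (fun x hx => (hder x hx).hasFDerivWithinAt) hinj f
  rw [key]
  refine setLIntegral_congr_fun hsm (fun x hx => ?_)
  rw [abs_neg, abs_of_nonneg (inv_nonneg.mpr (sq_nonneg x)), one_div, mul_comm]
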